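/- Let X and Y be finite simple graphs and let G be a subgroup of the automorphism group of Y that acts transitively on V(Y); set n = |G| and r = |G|/|V(Y)| (an integer). Then there is a graph homomorphism from X to Y if and only if there is a graph homomorphism from X ⋉ Y to the Kneser graph K_{n:r}; and there is a quantum homomorphism from X to Y if and only if there is a quantum homomorphism from X ⋉ Y to K_{n:r}. -/

import Mathlib

open Matrix Finset

/-- A quantum homomorphism from `X` to `Y`: for some `d ≥ 1` there are complex `d × d`
projectors `E x y` (Hermitian idempotents) with `∑ y, E x y = 1` for every `x`,
`E x y * E x y' = 0` whenever `y ≠ y'`, and `E x y * E x' y' = 0` whenever `x, x'`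
are adjacent in `X` and `y, y'` are equal or nonadjacent in `Y`. -/
def IsQuantumHom {V W : Type} [Fintype V] [Fintype W]
    (X : SimpleGraph V) (Y : SimpleGraph W) : Prop :=
  ∃ d : ℕ, 0 < d ∧ ∃ E : V → W → Matrix (Fin d) (Fin d) ℂ,
    (∀ x y, (E x y).IsHermitian ∧ E x y * E x y = E x y) ∧
    (∀ x, ∑ y, E x y = 1) ∧
    (∀ x y y', y ≠ y' → E x y * E x y' = 0) ∧
    (∀ x x' y y', X.Adj x x' → ¬ Y.Adj y y' → E x y * E x' y' = 0)

/-- The homomorphic product `X ⋉ Y`: distinct vertices `(x,y)` and `(x',y')` are adjacent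
iff `x = x'`, or (`x ~ x'` in `X` and `y, y'` are equal or nonadjacent in `Y`). -/
def homProd {V W : Type} (X : SimpleGraph V) (Y : SimpleGraph W) :
    SimpleGraph (V × W) where
  Adj a b := a ≠ b ∧ (a.1 = b.1 ∨ (X.Adj a.1 b.1 ∧ ¬ Y.Adj a.2 b.2))
  symm := ⟨by
    rintro a b ⟨hne, h⟩
    refine ⟨hne.symm, ?_⟩
    rcases h with h | ⟨h1, h2⟩
    · exact Or.inl h.symm
    · exact Or.inr ⟨h1.symm, fun hb => h2 hb.symm⟩⟩
  loopless := ⟨fun a ha => ha.1 rfl⟩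

/-- The independence number: the largest size of a set of pairwise nonadjacent vertices. -/
noncomputable def indepNum {U : Type} [Fintype U] (Z : SimpleGraph U) : ℕ :=
  sSup {n | ∃ s : Finset U, s.card = n ∧ ∀ a ∈ s, ∀ b ∈ s, a ≠ b → ¬ Z.Adj a b}


/-- The Kneser graph `K_{n:r}`: vertices are the `r`-element subsets of `{1,…,n}`,
two distinct subsets being adjacent iff they are disjoint. -/
def kneser (n r : ℕ) : SimpleGraph {s : Finset (Fin n) // s.card = r} where
  Adj s t := s ≠ t ∧ Disjoint s.1 t.1
  symm := ⟨fun s t ⟨hne, hd⟩ => ⟨hne.symm, hd.symm⟩⟩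
  loopless := ⟨fun s hs => hs.1 rfl⟩


section Helpers
set_option linter.unusedSectionVars false
set_option linter.unusedVariables false

variable {d n r : ℕ} {α β V W : Type} [Fintype α] [Fintype V] [Fintype W]

lemma sum_herm (t : Finset α) (E : α → Matrix (Fin d) (Fin d) ℂ)
    (h : ∀ u ∈ t, (E u).IsHermitian) : (∑ u ∈ t, E u).IsHermitian := by
  unfold Matrix.IsHermitian
  rw [Matrix.conjTranspose_sum]
  exact Finset.sum_congr rfl fun u hu => h u hu

lemma sum_proj (t : Finset α) (E : α → Matrix (Fin d) (Fin d) ℂ)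
    (hI : ∀ u ∈ t, E u * E u = E u)
    (hO : ∀ u ∈ t, ∀ u' ∈ t, u ≠ u' → E u * E u' = 0) :
    (∑ u ∈ t, E u) * (∑ u ∈ t, E u) = ∑ u ∈ t, E u := by
  rw [Finset.sum_mul_sum]
  refine Finset.sum_congr rfl fun u hu => ?_
  rw [Finset.sum_eq_single_of_mem u hu fun b hb hne => hO u hu b hb (Ne.symm hne)]
  exact hI u hu

lemma sum_mul_sum_zero [Fintype β] (t : Finset α) (t' : Finset β)
    (E : α → Matrix (Fin d) (Fin d) ℂ) (E' : β → Matrix (Fin d) (Fin d) ℂ)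
    (h : ∀ u ∈ t, ∀ u' ∈ t', E u * E' u' = 0) :
    (∑ u ∈ t, E u) * (∑ u' ∈ t', E' u') = 0 := by
  rw [Finset.sum_mul_sum]
  exact Finset.sum_eq_zero fun u hu => Finset.sum_eq_zero fun u' hu' => h u hu u' hu'

lemma trace_of_projection (A : Matrix (Fin d) (Fin d) ℂ)
    (hH : A.IsHermitian) (hI : A * A = A) :
    A.trace = ((∑ p, ∑ q, Complex.normSq (A p q) : ℝ) : ℂ) := by
  have h1 : A = Aᴴ * A := by rw [hH.eq, hI]
  calc A.trace = (Aᴴ * A).trace := by rw [← h1]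
    _ = ∑ p, ∑ q, (starRingEnd ℂ) (A q p) * A q p := by
        simp [Matrix.trace, Matrix.diag, Matrix.mul_apply, Matrix.conjTranspose_apply]
    _ = ∑ p, ∑ q, ((Complex.normSq (A q p) : ℝ) : ℂ) := by
        refine Finset.sum_congr rfl fun p _ => Finset.sum_congr rfl fun q _ => ?_
        rw [mul_comm, Complex.mul_conj]
    _ = ((∑ p, ∑ q, Complex.normSq (A p q) : ℝ) : ℂ) := by
        rw [Finset.sum_comm]
        push_cast
        rfl

lemma proj_eq_zero_of_sum_eq_zero {ι : Type} [Fintype ι]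
    (A : ι → Matrix (Fin d) (Fin d) ℂ)
    (hH : ∀ j, (A j).IsHermitian) (hI : ∀ j, A j * A j = A j)
    (hsum : ∑ j, A j = 0) : ∀ j, A j = 0 := by
  have ht : ∑ j, ((∑ p, ∑ q, Complex.normSq (A j p q) : ℝ) : ℂ) = 0 := by
    have h0 := congrArg Matrix.trace hsum
    rw [Matrix.trace_sum, Matrix.trace_zero] at h0
    rw [← h0]
    exact Finset.sum_congr rfl fun j _ => (trace_of_projection (A j) (hH j) (hI j)).symm
  have ht2 : ∑ j, (∑ p, ∑ q, Complex.normSq (A j p q)) = 0 := by exact_mod_cast ht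
  have hnn : ∀ j : ι, 0 ≤ ∑ p, ∑ q, Complex.normSq (A j p q) := fun j =>
    Finset.sum_nonneg fun p _ => Finset.sum_nonneg fun q _ => Complex.normSq_nonneg _
  intro j
  have hj : ∑ p, ∑ q, Complex.normSq (A j p q) = 0 :=
    (Finset.sum_eq_zero_iff_of_nonneg (fun j _ => hnn j)).1 ht2 j (Finset.mem_univ j)
  ext p q
  have hp : ∑ q, Complex.normSq (A j p q) = 0 :=
    (Finset.sum_eq_zero_iff_of_nonneg (fun p _ => Finset.sum_nonneg fun q _ =>
      Complex.normSq_nonneg _)).1 hj p (Finset.mem_univ p)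
  have hq : Complex.normSq (A j p q) = 0 :=
    (Finset.sum_eq_zero_iff_of_nonneg (fun q _ => Complex.normSq_nonneg _)).1 hp q
      (Finset.mem_univ q)
  simpa using Complex.normSq_eq_zero.1 hq

lemma kneser_adj_of_disjoint (hrpos : 0 < r) (s t : {s : Finset (Fin n) // s.card = r})
    (h : Disjoint s.1 t.1) : (kneser n r).Adj s t := by
  refine ⟨fun hst => ?_, h⟩
  subst hst
  have he : s.1 = ∅ := by simpa using disjoint_self.1 h
  have := s.2
  rw [he] at this
  simp at this
  omega

def forwardC (X : SimpleGraph V) (Y : SimpleGraph W) (hrpos : 0 < r)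
    (Tk : W → W → {s : Finset (Fin n) // s.card = r})
    (P1 : ∀ u w w', w ≠ w' → Disjoint (Tk u w).1 (Tk u w').1)
    (P3 : ∀ u u' w w', Y.Adj u u' → ¬ Y.Adj w w' → Disjoint (Tk u w).1 (Tk u' w').1)
    (f : X →g Y) : homProd X Y →g kneser n r := by
  refine ⟨fun p => Tk (f p.1) p.2, ?_⟩
  rintro ⟨x, w⟩ ⟨x', w'⟩ ⟨hne, hcase⟩
  rcases hcase with h | ⟨hxx', hww'⟩
  · dsimp only at h
    subst h
    have hww : w ≠ w' := fun hw => hne (by rw [hw])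
    exact kneser_adj_of_disjoint hrpos _ _ (P1 (f x) w w' hww)
  · exact kneser_adj_of_disjoint hrpos _ _ (P3 _ _ _ _ (f.map_rel hxx') hww')

lemma backwardC (X : SimpleGraph V) (Y : SimpleGraph W) (hn : 0 < n)
    (hcard : Fintype.card W * r = n)
    (h : homProd X Y →g kneser n r) : Nonempty (X →g Y) := by
  classical
  have hcover : ∀ x : V, ∀ i : Fin n, ∃ w : W, i ∈ (h (x, w)).1 := by
    intro x i
    have hdisj : ∀ w ∈ (univ : Finset W), ∀ w' ∈ (univ : Finset W), w ≠ w' →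
        Disjoint (h (x, w)).1 (h (x, w')).1 := by
      intro w _ w' _ hww
      have hadj : (homProd X Y).Adj (x, w) (x, w') :=
        ⟨fun hp => hww (congrArg Prod.snd hp), Or.inl rfl⟩
      exact (h.map_rel hadj).2
    have hcard2 : (univ.biUnion fun w => (h (x, w)).1).card = Fintype.card W * r := by
      rw [Finset.card_biUnion hdisj]
      simp [(h _).2, Finset.sum_const, Finset.card_univ]
    have huniv : (univ.biUnion fun w => (h (x, w)).1) = univ := by
      apply Finset.eq_univ_of_card
      rw [hcard2, hcard, Fintype.card_fin]
    have hi : i ∈ univ.biUnion fun w => (h (x, w)).1 := huniv ▸ Finset.mem_univ i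
    rcases Finset.mem_biUnion.1 hi with ⟨w, _, hw⟩
    exact ⟨w, hw⟩
  set i0 : Fin n := ⟨0, hn⟩ with hi0
  refine ⟨⟨fun x => (hcover x i0).choose, ?_⟩⟩
  intro x x' hxx'
  by_contra hna
  have hadj : (homProd X Y).Adj (x, (hcover x i0).choose) (x', (hcover x' i0).choose) :=
    ⟨fun hp => (X.ne_of_adj hxx') (congrArg Prod.fst hp), Or.inr ⟨hxx', hna⟩⟩
  exact Finset.disjoint_left.1 (h.map_rel hadj).2 (hcover x i0).choose_spec
    (hcover x' i0).choose_spec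

end Helpers
section QHelpers
set_option linter.unusedSectionVars false
variable {n r : ℕ} {V W : Type} [Fintype V] [Fintype W]

lemma forwardQ (X : SimpleGraph V) (Y : SimpleGraph W) (hrpos : 0 < r)
    (Tk : W → W → {s : Finset (Fin n) // s.card = r})
    (P1 : ∀ u w w', w ≠ w' → Disjoint (Tk u w).1 (Tk u w').1)
    (P3 : ∀ u u' w w', Y.Adj u u' → ¬ Y.Adj w w' → Disjoint (Tk u w).1 (Tk u' w').1)
    (hq : IsQuantumHom X Y) : IsQuantumHom (homProd X Y) (kneser n r) := by
  classical
  obtain ⟨d, hd, E, hE1, hE2, hE3, hE4⟩ := hq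
  refine ⟨d, hd, fun p s => ∑ u ∈ univ.filter (fun u => Tk u p.2 = s), E p.1 u, ?_, ?_, ?_, ?_⟩
  · intro p s
    exact ⟨sum_herm _ _ fun u _ => (hE1 p.1 u).1,
      sum_proj _ _ (fun u _ => (hE1 p.1 u).2) (fun u _ u' _ hne => hE3 p.1 u u' hne)⟩
  · intro p
    exact (Finset.sum_fiberwise_of_maps_to (fun u _ => Finset.mem_univ _) _).trans (hE2 p.1)
  · intro p s s' hss
    refine sum_mul_sum_zero _ _ _ _ fun u hu u' hu' => ?_
    simp only [Finset.mem_filter] at hu hu'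
    exact hE3 p.1 u u' fun he => hss (by rw [← hu.2, ← hu'.2, he])
  · rintro ⟨x, w⟩ ⟨x', w'⟩ s s' hadj hnadj
    refine sum_mul_sum_zero _ _ _ _ fun u hu u' hu' => ?_
    simp only [Finset.mem_filter] at hu hu'
    obtain ⟨hne, hcase⟩ := hadj
    rcases hcase with h | ⟨hxx', hww'⟩
    · dsimp only at h
      subst h
      have hww : w ≠ w' := fun hw => hne (by rw [hw])
      by_cases huu : u = u'
      · subst huu
        exact absurd (kneser_adj_of_disjoint hrpos s s'
          (by rw [← hu.2, ← hu'.2]; exact P1 u w w' hww)) hnadj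
      · exact hE3 x u u' huu
    · by_cases hYu : Y.Adj u u'
      · exact absurd (kneser_adj_of_disjoint hrpos s s'
          (by rw [← hu.2, ← hu'.2]; exact P3 u u' w w' hYu hww')) hnadj
      · exact hE4 x x' u u' hxx' hYu

lemma backwardQ (X : SimpleGraph V) (Y : SimpleGraph W) (hn : 0 < n)
    (hcard : Fintype.card W * r = n)
    (hq : IsQuantumHom (homProd X Y) (kneser n r)) : IsQuantumHom X Y := by
  classical
  obtain ⟨d, hd, F, hF1, hF2, hF3, hF4⟩ := hq
  let Ee : Fin n → V → W → Matrix (Fin d) (Fin d) ℂ :=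
    fun j x w => ∑ s ∈ univ.filter
      (fun s : {s : Finset (Fin n) // s.card = r} => j ∈ s.1), F (x, w) s
  have hEherm : ∀ j x w, (Ee j x w).IsHermitian := fun j x w =>
    sum_herm _ _ fun s _ => (hF1 (x, w) s).1
  have hEidem : ∀ j x w, Ee j x w * Ee j x w = Ee j x w := fun j x w =>
    sum_proj _ _ (fun s _ => (hF1 (x, w) s).2) (fun s _ s' _ hne => hF3 (x, w) s s' hne)
  have hEortho : ∀ j x w w', w ≠ w' → Ee j x w * Ee j x w' = 0 := by
    intro j x w w' hww
    refine sum_mul_sum_zero _ _ _ _ fun s hs s' hs' => ?_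
    simp only [Finset.mem_filter] at hs hs'
    refine hF4 (x, w) (x, w') s s' ⟨fun hp => hww (congrArg Prod.snd hp), Or.inl rfl⟩ ?_
    exact fun hA => Finset.disjoint_left.1 hA.2 hs.2 hs'.2
  have hEadj : ∀ j x x' w w', X.Adj x x' → ¬ Y.Adj w w' → Ee j x w * Ee j x' w' = 0 := by
    intro j x x' w w' hxx' hww
    refine sum_mul_sum_zero _ _ _ _ fun s hs s' hs' => ?_
    simp only [Finset.mem_filter] at hs hs'
    refine hF4 (x, w) (x', w') s s'
      ⟨fun hp => (X.ne_of_adj hxx') (congrArg Prod.fst hp), Or.inr ⟨hxx', hww⟩⟩ ?_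
    exact fun hA => Finset.disjoint_left.1 hA.2 hs.2 hs'.2
  have hEsum : ∀ (x : V) (j : Fin n), ∑ w, Ee j x w = 1 := by
    intro x
    have hQH : ∀ j : Fin n, (∑ w, Ee j x w).IsHermitian := fun j =>
      sum_herm _ _ fun w _ => hEherm j x w
    have hQI : ∀ j : Fin n, (∑ w, Ee j x w) * (∑ w, Ee j x w) = ∑ w, Ee j x w := fun j =>
      sum_proj _ _ (fun w _ => hEidem j x w) (fun w _ w' _ hne => hEortho j x w w' hne)
    have hQsum : ∑ j : Fin n, ∑ w, Ee j x w = n • (1 : Matrix (Fin d) (Fin d) ℂ) := by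
      rw [Finset.sum_comm]
      have hw1 : ∀ w : W, ∑ j : Fin n, Ee j x w = r • (1 : Matrix (Fin d) (Fin d) ℂ) := by
        intro w
        calc ∑ j : Fin n, Ee j x w
            = ∑ j : Fin n, ∑ s : {s : Finset (Fin n) // s.card = r},
                if j ∈ s.1 then F (x, w) s else 0 := by
              refine Finset.sum_congr rfl fun j _ => ?_
              simp only [Ee]
              rw [Finset.sum_filter]
          _ = ∑ s : {s : Finset (Fin n) // s.card = r}, ∑ j : Fin n,
                if j ∈ s.1 then F (x, w) s else 0 := Finset.sum_comm
          _ = ∑ s : {s : Finset (Fin n) // s.card = r}, r • F (x, w) s := by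
              refine Finset.sum_congr rfl fun s _ => ?_
              rw [Finset.sum_ite_mem, Finset.univ_inter, Finset.sum_const, s.2]
          _ = r • ∑ s : {s : Finset (Fin n) // s.card = r}, F (x, w) s := Finset.smul_sum.symm
          _ = r • 1 := by rw [hF2 (x, w)]
      rw [Finset.sum_congr rfl fun w _ => hw1 w, Finset.sum_const, Finset.card_univ,
        smul_smul, hcard]
    have hR := proj_eq_zero_of_sum_eq_zero (fun j : Fin n => 1 - ∑ w, Ee j x w)
      (fun j => Matrix.isHermitian_one.sub (hQH j))
      (fun j => by rw [sub_mul, one_mul, mul_sub, mul_one, hQI j]; abel)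
      (by rw [Finset.sum_sub_distrib, Finset.sum_const, Finset.card_univ, Fintype.card_fin,
        hQsum, sub_self])
    intro j
    exact (sub_eq_zero.1 (hR j)).symm
  exact ⟨d, hd, Ee ⟨0, hn⟩, fun x w => ⟨hEherm _ x w, hEidem _ x w⟩, fun x => hEsum x _,
    fun x w w' h => hEortho _ x w w' h, fun x x' w w' h h' => hEadj _ x x' w w' h h'⟩

end QHelpers
/-- If `G` is a group of automorphisms of `Y` acting transitively on `V(Y)`,
with `n = |G|` and `r = |G|/|V(Y)|` an integer, then `X → Y` iff `X ⋉ Y → K_{n:r}`,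
and `X →q Y` iff `X ⋉ Y →q K_{n:r}`. -/
theorem hom_iff_homProd_to_kneser {V W : Type} [Fintype V] [Fintype W]
    (X : SimpleGraph V) (Y : SimpleGraph W)
    (G : Subgroup (Equiv.Perm W))
    (hAut : ∀ g ∈ G, ∀ a b : W, Y.Adj (g a) (g b) ↔ Y.Adj a b)
    (hTrans : ∀ u v : W, ∃ g ∈ G, g u = v)
    (r : ℕ) (hr : Nat.card G = r * Fintype.card W) :
    (Nonempty (X →g Y) ↔ Nonempty (homProd X Y →g kneser (Nat.card G) r)) ∧
    (IsQuantumHom X Y ↔ IsQuantumHom (homProd X Y) (kneser (Nat.card G) r)) := by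
  classical
  haveI : Fintype ↥G := Fintype.ofFinite ↥G
  have hG1 : 0 < Nat.card ↥G := Nat.card_pos
  have hWpos : 0 < Fintype.card W := by
    rcases Nat.eq_zero_or_pos (Fintype.card W) with h | h
    · rw [h, Nat.mul_zero] at hr; omega
    · exact h
  have hrpos : 0 < r := by
    rcases Nat.eq_zero_or_pos r with h | h
    · rw [h, Nat.zero_mul] at hr; omega
    · exact h
  set n := Nat.card ↥G with hn
  have hnc : Fintype.card ↥G = n := Nat.card_eq_fintype_card.symm
  have hcard : Fintype.card W * r = n := by rw [mul_comm]; omega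
  let e : ↥G ≃ Fin n := Fintype.equivFinOfCardEq hnc
  let S : W → W → Finset ↥G := fun u w => univ.filter (fun g => (g : Equiv.Perm W) u = w)
  have hS_mem : ∀ (u w : W) (g : ↥G), g ∈ S u w ↔ (g : Equiv.Perm W) u = w := by
    intro u w g; simp [S]
  have hS_card_eq : ∀ u w w', (S u w).card = (S u w').card := by
    intro u w w'
    obtain ⟨h, hmem, hww'⟩ := hTrans w w'
    refine Finset.card_bij' (fun g _ => (⟨h, hmem⟩ : ↥G) * g)
      (fun g _ => (⟨h, hmem⟩ : ↥G)⁻¹ * g) ?_ ?_ ?_ ?_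
    · intro g hg
      rw [hS_mem] at hg ⊢
      simp [Equiv.Perm.mul_apply, hg, hww']
    · intro g hg
      rw [hS_mem] at hg ⊢
      simp [Equiv.Perm.mul_apply, hg, ← hww']
    · intro g hg
      simp [← mul_assoc]
    · intro g hg
      simp [← mul_assoc]
  have hS_sum : ∀ u : W, ∑ w : W, (S u w).card = Fintype.card ↥G := by
    intro u
    have h2 := Finset.card_eq_sum_card_fiberwise
      (s := (univ : Finset ↥G)) (t := (univ : Finset W))
      (f := fun g : ↥G => (g : Equiv.Perm W) u) (fun g _ => Finset.mem_univ _)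
    rw [Finset.card_univ] at h2
    exact h2.symm
  have hS_card : ∀ u w, (S u w).card = r := by
    intro u w
    have h1 : Fintype.card W * (S u w).card = r * Fintype.card W := by
      calc Fintype.card W * (S u w).card
          = ∑ _w' : W, (S u w).card := by
            rw [Finset.sum_const, Finset.card_univ, smul_eq_mul]
        _ = ∑ w' : W, (S u w').card := Finset.sum_congr rfl fun w' _ => hS_card_eq u w w'
        _ = Fintype.card ↥G := hS_sum u
        _ = r * Fintype.card W := by rw [hnc]; omega
    rw [mul_comm r] at h1
    exact Nat.eq_of_mul_eq_mul_left hWpos h1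
  let T : W → W → Finset (Fin n) := fun u w => (S u w).image e
  have hT_card : ∀ u w, (T u w).card = r := fun u w => by
    rw [Finset.card_image_of_injective _ e.injective]; exact hS_card u w
  let Tk : W → W → {s : Finset (Fin n) // s.card = r} := fun u w => ⟨T u w, hT_card u w⟩
  have hT_mem : ∀ (u w : W) (i : Fin n), i ∈ T u w ↔
      ∃ g : ↥G, (g : Equiv.Perm W) u = w ∧ e g = i := by
    intro u w i
    simp [T, S, Finset.mem_image]
  have hdisj1 : ∀ (u : W) (w w' : W), w ≠ w' → Disjoint (Tk u w).1 (Tk u w').1 := by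
    intro u w w' hww
    rw [Finset.disjoint_left]
    intro i hi hi'
    obtain ⟨g, hg, hgi⟩ := (hT_mem u w i).1 hi
    obtain ⟨g', hg', hgi'⟩ := (hT_mem u w' i).1 hi'
    have hgg : g = g' := e.injective (hgi.trans hgi'.symm)
    exact hww (by rw [← hg, hgg, hg'])
  have hdisj3 : ∀ u u' w w', Y.Adj u u' → ¬ Y.Adj w w' →
      Disjoint (Tk u w).1 (Tk u' w').1 := by
    intro u u' w w' hYu hnY
    rw [Finset.disjoint_left]
    intro i hi hi'
    obtain ⟨g, hg, hgi⟩ := (hT_mem u w i).1 hi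
    obtain ⟨g', hg', hgi'⟩ := (hT_mem u' w' i).1 hi'
    have hgg : g = g' := e.injective (hgi.trans hgi'.symm)
    subst hgg
    have hadj : Y.Adj ((g : Equiv.Perm W) u) ((g : Equiv.Perm W) u') :=
      (hAut g g.2 u u').2 hYu
    rw [hg, hg'] at hadj
    exact hnY hadj
  refine ⟨⟨fun hf => hf.elim fun f => ⟨forwardC X Y hrpos Tk hdisj1 hdisj3 f⟩,
      fun hh => hh.elim fun h => backwardC X Y hG1 hcard h⟩,
    ⟨fun hq => forwardQ X Y hrpos Tk hdisj1 hdisj3 hq,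
      fun hq => backwardQ X Y hG1 hcard hq⟩⟩
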